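/- arXiv:0806.1180 — 3 statements merged into one kernel-verified Lean document; each statement's English description precedes it below -/
import Mathlib

section
/- Let g, h, y be non-negative locally integrable functions on (t_0, ∞) satisfying dy/dt ≤ g·y + h for all t ≥ t_0, and suppose there exist positive constants r, c_1, c_2, c_3 such that for all t ≥ t_0: ∫_t^{t+r} g(s) ds ≤ c_1, ∫_t^{t+r} h(s) ds ≤ c_2, and ∫_t^{t+r} y(s) ds ≤ c_3. Then y(t+r) ≤ (c_3/r + c_2) · e^{c_1} for all t ≥ t_0. -/
open MeasureTheory Real

open Set intervalIntegral


lemma ug_piece {y y' g h : ℝ → ℝ} {a v : ℝ} (hav : a ≤ v)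
    (hcont : ContinuousOn y (Icc a v))
    (hder : ∀ x ∈ Ioo a v, HasDerivAt y (y' x) x)
    (hle : ∀ x ∈ Ioo a v, y' x ≤ g x * y x + h x)
    (hg0 : ∀ x ∈ Icc a v, 0 ≤ g x) (hh0 : ∀ x ∈ Icc a v, 0 ≤ h x)
    (hy0 : ∀ x ∈ Icc a v, 0 ≤ y x)
    (hgi : IntervalIntegrable g volume a v) (hhi : IntervalIntegrable h volume a v)
    (hγ : (∫ x in a..v, g x) < 1) :
    y v ≤ (y a + ∫ x in a..v, h x) / (1 - ∫ x in a..v, g x) := by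
  obtain ⟨ξ, hξmem, hξmax⟩ := isCompact_Icc.exists_isMaxOn (nonempty_Icc.2 hav) hcont
  set M := y ξ with hM
  have haξ : a ≤ ξ := hξmem.1
  have hξv : ξ ≤ v := hξmem.2
  have hsub : Icc a ξ ⊆ Icc a v := Icc_subset_Icc le_rfl hξv
  have hMnn : 0 ≤ M := hy0 ξ hξmem
  -- integrability of g * y on Icc a ξ
  have hgiξ : IntervalIntegrable g volume a ξ :=
    hgi.mono_set (by rw [uIcc_of_le haξ, uIcc_of_le hav]; exact hsub)
  have hhiξ : IntervalIntegrable h volume a ξ :=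
    hhi.mono_set (by rw [uIcc_of_le haξ, uIcc_of_le hav]; exact hsub)
  have hgIcc : IntegrableOn g (Icc a ξ) :=
    (intervalIntegrable_iff_integrableOn_Icc_of_le haξ).1 hgiξ
  have hymeas : AEStronglyMeasurable y (volume.restrict (Icc a ξ)) :=
    (hcont.mono hsub).aestronglyMeasurable measurableSet_Icc
  have hybdd : ∀ᵐ x ∂(volume.restrict (Icc a ξ)), ‖y x‖ ≤ M := by
    refine (ae_restrict_iff' measurableSet_Icc).2 (ae_of_all _ fun x hx => ?_)
    rw [Real.norm_eq_abs, abs_of_nonneg (hy0 x (hsub hx))]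
    exact hξmax (hsub hx)
  have hgyInt : IntegrableOn (fun x => g x * y x) (Icc a ξ) := by
    have := Integrable.bdd_mul (c := M) hgIcc hymeas hybdd
    simpa [mul_comm, IntegrableOn] using this
  have hgyii : IntervalIntegrable (fun x => g x * y x) volume a ξ :=
    (intervalIntegrable_iff_integrableOn_Icc_of_le haξ).2 hgyInt
  have hφint : IntegrableOn (fun x => g x * y x + h x) (Icc a ξ) :=
    hgyInt.add ((intervalIntegrable_iff_integrableOn_Icc_of_le haξ).1 hhiξ)
  -- FTC inequality on [a, ξ]
  have key : y ξ - y a ≤ ∫ x in a..ξ, (g x * y x + h x) := by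
    refine sub_le_integral_of_hasDeriv_right_of_le haξ (hcont.mono hsub)
      (fun x hx => (hder x ⟨hx.1, lt_of_lt_of_le hx.2 hξv⟩).hasDerivWithinAt)
      hφint (fun x hx => hle x ⟨hx.1, lt_of_lt_of_le hx.2 hξv⟩)
  rw [integral_add hgyii hhiξ] at key
  -- bound ∫ g y ≤ M * ∫_a^v g
  have hb1 : (∫ x in a..ξ, g x * y x) ≤ M * ∫ x in a..v, g x := by
    have h1 : (∫ x in a..ξ, g x * y x) ≤ ∫ x in a..ξ, M * g x := by
      refine integral_mono_on haξ hgyii (hgiξ.const_mul M) fun x hx => ?_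
      have := mul_le_mul_of_nonneg_left (hξmax (hsub hx)) (hg0 x (hsub hx))
      linarith [this]
    have h2 : (∫ x in a..ξ, g x) ≤ ∫ x in a..v, g x := by
      have hgiξv : IntervalIntegrable g volume ξ v :=
        hgi.mono_set (by rw [uIcc_of_le hξv, uIcc_of_le hav]; exact Icc_subset_Icc haξ le_rfl)
      have := integral_add_adjacent_intervals hgiξ hgiξv
      have hnn : 0 ≤ ∫ x in ξ..v, g x :=
        integral_nonneg hξv fun x hx => hg0 x ⟨haξ.trans hx.1, hx.2⟩
      linarith
    rw [intervalIntegral.integral_const_mul] at h1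
    calc (∫ x in a..ξ, g x * y x) ≤ M * ∫ x in a..ξ, g x := h1
      _ ≤ M * ∫ x in a..v, g x := mul_le_mul_of_nonneg_left h2 hMnn
  have hb2 : (∫ x in a..ξ, h x) ≤ ∫ x in a..v, h x := by
    have hhiξv : IntervalIntegrable h volume ξ v :=
      hhi.mono_set (by rw [uIcc_of_le hξv, uIcc_of_le hav]; exact Icc_subset_Icc haξ le_rfl)
    have := integral_add_adjacent_intervals hhiξ hhiξv
    have hnn : 0 ≤ ∫ x in ξ..v, h x :=
      integral_nonneg hξv fun x hx => hh0 x ⟨haξ.trans hx.1, hx.2⟩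
    linarith
  -- conclude
  have hMle : M * (1 - ∫ x in a..v, g x) ≤ y a + ∫ x in a..v, h x := by nlinarith
  have hyv : y v ≤ M := hξmax (right_mem_Icc.2 hav)
  rw [le_div_iff₀ (by linarith)]
  nlinarith

lemma ug_log_concave {γ ε : ℝ} (hγ0 : 0 ≤ γ) (hγε : γ ≤ ε) (hε0 : 0 < ε) (hε1 : ε < 1) :
    (1 - γ)⁻¹ ≤ Real.exp ((-Real.log (1 - ε) / ε) * γ) := by
  have hγ1 : γ < 1 := lt_of_le_of_lt hγε hε1
  have hcc := strictConcaveOn_log_Ioi.concaveOn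
  have h1ε : (1 - ε : ℝ) ∈ Ioi (0:ℝ) := by simp; linarith
  have h1 : (1 : ℝ) ∈ Ioi (0:ℝ) := by norm_num
  have ha : (0:ℝ) ≤ γ / ε := div_nonneg hγ0 hε0.le
  have hb : (0:ℝ) ≤ 1 - γ / ε := by
    rw [sub_nonneg]; exact div_le_one_of_le₀ hγε hε0.le
  have hab : γ / ε + (1 - γ / ε) = 1 := by ring
  have := hcc.2 h1ε h1 ha hb hab
  have hcomb : (γ / ε) • (1 - ε) + (1 - γ / ε) • (1:ℝ) = 1 - γ := by
    simp only [smul_eq_mul]; rw [mul_sub, mul_one, div_mul_cancel₀ γ hε0.ne']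
    ring
  rw [hcomb, Real.log_one, smul_eq_mul, smul_zero, add_zero] at this
  -- this : (γ/ε) * log (1-ε) ≤ log (1-γ)
  have hlog : -Real.log (1 - γ) ≤ -Real.log (1 - ε) / ε * γ := by
    have h2 : -Real.log (1 - ε) / ε * γ = -(γ / ε * Real.log (1 - ε)) := by ring
    linarith
  calc (1 - γ)⁻¹ = Real.exp (-Real.log (1 - γ)) := by
        rw [← Real.log_inv, Real.exp_log (inv_pos.2 (by linarith))]
    _ ≤ _ := Real.exp_le_exp.2 hlog

lemma ug_exp_bound {y y' g h : ℝ → ℝ} {s b : ℝ} (hsb : s < b)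
    (hcont : ContinuousOn y (Icc s b))
    (hder : ∀ x ∈ Ioo s b, HasDerivAt y (y' x) x)
    (hle : ∀ x ∈ Ioo s b, y' x ≤ g x * y x + h x)
    (hg0 : ∀ x ∈ Icc s b, 0 ≤ g x) (hh0 : ∀ x ∈ Icc s b, 0 ≤ h x)
    (hy0 : ∀ x ∈ Icc s b, 0 ≤ y x)
    (hgi : IntervalIntegrable g volume s b) (hhi : IntervalIntegrable h volume s b)
    {ε : ℝ} (hε0 : 0 < ε) (hε1 : ε < 1) :
    y b ≤ (y s + ∫ x in s..b, h x) *
      Real.exp ((-Real.log (1 - ε) / ε) * ∫ x in s..b, g x) := by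
  set C := -Real.log (1 - ε) / ε with hC
  have hC0 : 0 ≤ C :=
    div_nonneg (neg_nonneg.2 (Real.log_nonpos (by linarith) (by linarith))) hε0.le
  -- sub-interval integrability
  have hgsub : ∀ p q, s ≤ p → p ≤ q → q ≤ b → IntervalIntegrable g volume p q := by
    intro p q h1 h2 h3
    exact hgi.mono_set (by rw [uIcc_of_le h2, uIcc_of_le hsb.le]; exact Icc_subset_Icc h1 h3)
  have hhsub : ∀ p q, s ≤ p → p ≤ q → q ≤ b → IntervalIntegrable h volume p q := by
    intro p q h1 h2 h3
    exact hhi.mono_set (by rw [uIcc_of_le h2, uIcc_of_le hsb.le]; exact Icc_subset_Icc h1 h3)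
  -- uniform continuity of the primitive of g
  set Φ : ℝ → ℝ := fun x => ∫ τ in s..x, g τ with hΦ
  have hΦc : ContinuousOn Φ (Icc s b) := by
    have hint : IntegrableOn g (uIcc s b) := by
      rw [uIcc_of_le hsb.le]
      exact (intervalIntegrable_iff_integrableOn_Icc_of_le hsb.le).1 hgi
    have := intervalIntegral.continuousOn_primitive_interval hint
    rwa [uIcc_of_le hsb.le] at this
  obtain ⟨δ, hδ0, hδ⟩ := Metric.uniformContinuousOn_iff.1
    (isCompact_Icc.uniformContinuousOn_of_continuous hΦc) ε hε0
  -- choose the number of subdivisions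
  obtain ⟨m, hm⟩ := exists_nat_gt ((b - s) / δ)
  have hm0 : 0 < (m : ℝ) := lt_of_le_of_lt (div_nonneg (by linarith) hδ0.le) hm
  have hmesh : (b - s) / m < δ := by
    rw [div_lt_iff₀ hm0]
    rw [div_lt_iff₀ hδ0] at hm
    linarith [hm]
  set q : ℝ := (b - s) / m with hq
  have hq0 : 0 < q := div_pos (by linarith) hm0
  set x : ℕ → ℝ := fun j => s + j * q with hxdef
  have hx0 : x 0 = s := by simp [hxdef]
  have hxm : x m = b := by
    simp only [hxdef, hq]
    field_simp
    ring
  have hstep : ∀ j : ℕ, x (j + 1) = x j + q := by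
    intro j; simp only [hxdef]; push_cast; ring
  have hxmono : ∀ j : ℕ, x j ≤ x (j + 1) := fun j => by rw [hstep j]; linarith
  have hxmem : ∀ j : ℕ, j ≤ m → x j ∈ Icc s b := by
    intro j hj
    have hjm : (j : ℝ) ≤ m := Nat.cast_le.2 hj
    constructor
    · simp only [hxdef]; nlinarith
    · have : x j ≤ x m := by
        simp only [hxdef]
        have := mul_le_mul_of_nonneg_right hjm hq0.le
        linarith
      rw [hxm] at this; exact this
  -- increments of the primitive are small
  have hγsmall : ∀ j : ℕ, j < m → (∫ τ in x j..x (j + 1), g τ) ≤ ε := by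
    intro j hj
    have hmem1 := hxmem j hj.le
    have hmem2 := hxmem (j + 1) hj
    have hadd := integral_add_adjacent_intervals
      (hgsub s (x j) le_rfl hmem1.1 hmem1.2)
      (hgsub (x j) (x (j + 1)) hmem1.1 (hxmono j) hmem2.2)
    have hdist : dist (x (j + 1)) (x j) < δ := by
      rw [Real.dist_eq, hstep j]
      rw [abs_of_nonneg (by linarith)]
      simpa using hmesh
    have := hδ (x (j + 1)) hmem2 (x j) hmem1 hdist
    rw [Real.dist_eq] at this
    have heq : Φ (x (j + 1)) - Φ (x j) = ∫ τ in x j..x (j + 1), g τ := by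
      simp only [hΦ]; linarith [hadd]
    calc (∫ τ in x j..x (j + 1), g τ) ≤ |Φ (x (j + 1)) - Φ (x j)| := by
          rw [heq]; exact le_abs_self _
      _ ≤ ε := this.le
  have hγ0 : ∀ j : ℕ, j < m → 0 ≤ ∫ τ in x j..x (j + 1), g τ := by
    intro j hj
    exact intervalIntegral.integral_nonneg (hxmono j)
      (fun τ hτ => hg0 τ ⟨(hxmem j hj.le).1.trans hτ.1, hτ.2.trans (hxmem (j + 1) hj).2⟩)
  -- main induction
  have main : ∀ i : ℕ, i ≤ m →
      y (x i) ≤ (y s + ∫ τ in s..x i, h τ) * Real.exp (C * ∫ τ in s..x i, g τ) := by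
    intro i
    induction i with
    | zero => intro _; simp [hx0]
    | succ i ih =>
      intro hi1
      have hi : i ≤ m := Nat.le_of_succ_le hi1
      have him : i < m := hi1
      have ih' := ih hi
      have hmem1 := hxmem i hi
      have hmem2 := hxmem (i + 1) hi1
      set a := x i
      set v := x (i + 1)
      have hav : a ≤ v := hxmono i
      set γ : ℝ := ∫ τ in a..v, g τ with hγdef
      set Hi : ℝ := ∫ τ in a..v, h τ with hHidef
      set Ai : ℝ := ∫ τ in s..a, h τ with hAidef
      set Bi : ℝ := ∫ τ in s..a, g τ with hBidef
      have hγε : γ ≤ ε := hγsmall i him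
      have hγnn : 0 ≤ γ := hγ0 i him
      have hγ1 : γ < 1 := lt_of_le_of_lt hγε hε1
      -- apply the one-piece bound
      have hpiece : y v ≤ (y a + Hi) / (1 - γ) := by
        refine ug_piece hav (hcont.mono (Icc_subset_Icc hmem1.1 hmem2.2))
          (fun z hz => hder z ⟨lt_of_le_of_lt hmem1.1 hz.1, lt_of_lt_of_le hz.2 hmem2.2⟩)
          (fun z hz => hle z ⟨lt_of_le_of_lt hmem1.1 hz.1, lt_of_lt_of_le hz.2 hmem2.2⟩)
          (fun z hz => hg0 z ⟨hmem1.1.trans hz.1, hz.2.trans hmem2.2⟩)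
          (fun z hz => hh0 z ⟨hmem1.1.trans hz.1, hz.2.trans hmem2.2⟩)
          (fun z hz => hy0 z ⟨hmem1.1.trans hz.1, hz.2.trans hmem2.2⟩)
          (hgsub a v hmem1.1 hav hmem2.2) (hhsub a v hmem1.1 hav hmem2.2) hγ1
      have hinv : (1 - γ)⁻¹ ≤ Real.exp (C * γ) := ug_log_concave hγnn hγε hε0 hε1
      have hAinn : 0 ≤ Ai := intervalIntegral.integral_nonneg hmem1.1
        (fun τ hτ => hh0 τ ⟨hτ.1, hτ.2.trans hmem1.2⟩)
      have hBinn : 0 ≤ Bi := intervalIntegral.integral_nonneg hmem1.1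
        (fun τ hτ => hg0 τ ⟨hτ.1, hτ.2.trans hmem1.2⟩)
      have hHinn : 0 ≤ Hi := intervalIntegral.integral_nonneg hav
        (fun τ hτ => hh0 τ ⟨hmem1.1.trans hτ.1, hτ.2.trans hmem2.2⟩)
      have hysnn : 0 ≤ y s := hy0 s (left_mem_Icc.2 hsb.le)
      have hyann : 0 ≤ y a := hy0 a hmem1
      have hE1 : 1 ≤ Real.exp (C * Bi) := Real.one_le_exp (mul_nonneg hC0 hBinn)
      have hinvnn : (0:ℝ) ≤ (1 - γ)⁻¹ := inv_nonneg.2 (by linarith)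
      have haddh : Ai + Hi = ∫ τ in s..v, h τ :=
        integral_add_adjacent_intervals (hhsub s a le_rfl hmem1.1 hmem1.2)
          (hhsub a v hmem1.1 hav hmem2.2)
      have haddg : Bi + γ = ∫ τ in s..v, g τ :=
        integral_add_adjacent_intervals (hgsub s a le_rfl hmem1.1 hmem1.2)
          (hgsub a v hmem1.1 hav hmem2.2)
      have hexpnn : (0:ℝ) < Real.exp (C * Bi) := Real.exp_pos _
      calc y v ≤ (y a + Hi) / (1 - γ) := hpiece
        _ = (y a + Hi) * (1 - γ)⁻¹ := div_eq_mul_inv _ _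
        _ ≤ ((y s + Ai) * Real.exp (C * Bi) + Hi) * (1 - γ)⁻¹ :=
            mul_le_mul_of_nonneg_right (add_le_add_left ih' Hi) hinvnn
        _ ≤ ((y s + Ai + Hi) * Real.exp (C * Bi)) * (1 - γ)⁻¹ := by
            refine mul_le_mul_of_nonneg_right ?_ hinvnn
            nlinarith
        _ ≤ ((y s + Ai + Hi) * Real.exp (C * Bi)) * Real.exp (C * γ) := by
            refine mul_le_mul_of_nonneg_left hinv ?_
            positivity
        _ = (y s + (Ai + Hi)) * Real.exp (C * (Bi + γ)) := by
            rw [mul_add C Bi γ, Real.exp_add]; ring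
        _ = (y s + ∫ τ in s..v, h τ) * Real.exp (C * ∫ τ in s..v, g τ) := by
            rw [haddh, haddg]
  have := main m le_rfl
  rwa [hxm] at this

/-- **Uniform Gronwall lemma.** -/
theorem uniform_gronwall (t0 r c1 c2 c3 : ℝ) (hr : 0 < r) (hc1 : 0 < c1) (hc2 : 0 < c2)
    (hc3 : 0 < c3) (g h y y' : ℝ → ℝ)
    (hg0 : ∀ t, t0 ≤ t → 0 ≤ g t) (hh0 : ∀ t, t0 ≤ t → 0 ≤ h t) (hy0 : ∀ t, t0 ≤ t → 0 ≤ y t)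
    (hgint : ∀ t, t0 ≤ t → IntervalIntegrable g volume t (t + r))
    (hhint : ∀ t, t0 ≤ t → IntervalIntegrable h volume t (t + r))
    (hyint : ∀ t, t0 ≤ t → IntervalIntegrable y volume t (t + r))
    (hderiv : ∀ t, t0 ≤ t → HasDerivAt y (y' t) t)
    (hineq : ∀ t, t0 ≤ t → y' t ≤ g t * y t + h t)
    (hg : ∀ t, t0 ≤ t → (∫ s in t..(t + r), g s) ≤ c1)
    (hh : ∀ t, t0 ≤ t → (∫ s in t..(t + r), h s) ≤ c2)
    (hy : ∀ t, t0 ≤ t → (∫ s in t..(t + r), y s) ≤ c3) :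
    ∀ t, t0 ≤ t → y (t + r) ≤ (c3 / r + c2) * Real.exp c1 := by
  intro t ht
  set b := t + r with hbdef
  have htb : t ≤ b := by simp only [hbdef]; linarith
  -- Step A : for every s ∈ [t, b], y b ≤ (y s + c2) * exp c1
  have hA : ∀ s ∈ Icc t b, y b ≤ (y s + c2) * Real.exp c1 := by
    intro s hs
    have hts0 : t0 ≤ s := ht.trans hs.1
    rcases eq_or_lt_of_le hs.2 with heq | hlt
    · rw [heq]
      nlinarith [Real.one_le_exp hc1.le, hy0 b (ht.trans htb)]
    · -- sub-interval integrability on [s, b]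
      have hgsb : IntervalIntegrable g volume s b := (hgint t ht).mono_set
        (by rw [uIcc_of_le hlt.le, uIcc_of_le htb]; exact Icc_subset_Icc hs.1 le_rfl)
      have hhsb : IntervalIntegrable h volume s b := (hhint t ht).mono_set
        (by rw [uIcc_of_le hlt.le, uIcc_of_le htb]; exact Icc_subset_Icc hs.1 le_rfl)
      have hgts : IntervalIntegrable g volume t s := (hgint t ht).mono_set
        (by rw [uIcc_of_le hs.1, uIcc_of_le htb]; exact Icc_subset_Icc le_rfl hs.2)
      have hhts : IntervalIntegrable h volume t s := (hhint t ht).mono_set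
        (by rw [uIcc_of_le hs.1, uIcc_of_le htb]; exact Icc_subset_Icc le_rfl hs.2)
      -- bounds on ∫_s^b g and ∫_s^b h
      have hgb : (∫ τ in s..b, g τ) ≤ c1 := by
        have hadd := intervalIntegral.integral_add_adjacent_intervals hgts hgsb
        have hnn : 0 ≤ ∫ τ in t..s, g τ :=
          intervalIntegral.integral_nonneg hs.1 (fun τ hτ => hg0 τ (ht.trans hτ.1))
        have := hg t ht
        linarith
      have hgnn : 0 ≤ ∫ τ in s..b, g τ :=
        intervalIntegral.integral_nonneg hlt.le (fun τ hτ => hg0 τ (hts0.trans hτ.1))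
      have hhb : (∫ τ in s..b, h τ) ≤ c2 := by
        have hadd := intervalIntegral.integral_add_adjacent_intervals hhts hhsb
        have hnn : 0 ≤ ∫ τ in t..s, h τ :=
          intervalIntegral.integral_nonneg hs.1 (fun τ hτ => hh0 τ (ht.trans hτ.1))
        have := hh t ht
        linarith
      have hhnn : 0 ≤ ∫ τ in s..b, h τ :=
        intervalIntegral.integral_nonneg hlt.le (fun τ hτ => hh0 τ (hts0.trans hτ.1))
      have hysnn : 0 ≤ y s := hy0 s hts0
      -- the ε-dependent bound
      have hεbound : ∀ ε ∈ Ioo (0:ℝ) 1,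
          y b ≤ (y s + c2) * Real.exp (c1 * (-Real.log (1 - ε) / ε)) := by
        intro ε hε
        have hC0 : 0 ≤ -Real.log (1 - ε) / ε :=
          div_nonneg (neg_nonneg.2 (Real.log_nonpos (by linarith [hε.2])
            (by linarith [hε.1]))) hε.1.le
        have base := ug_exp_bound (y' := y') hlt
          (fun z hz => ((hderiv z (hts0.trans hz.1)).continuousAt).continuousWithinAt)
          (fun z hz => hderiv z (hts0.trans hz.1.le))
          (fun z hz => hineq z (hts0.trans hz.1.le))
          (fun z hz => hg0 z (hts0.trans hz.1)) (fun z hz => hh0 z (hts0.trans hz.1))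
          (fun z hz => hy0 z (hts0.trans hz.1)) hgsb hhsb hε.1 hε.2
        calc y b ≤ (y s + ∫ τ in s..b, h τ) *
              Real.exp ((-Real.log (1 - ε) / ε) * ∫ τ in s..b, g τ) := base
          _ ≤ (y s + c2) * Real.exp (c1 * (-Real.log (1 - ε) / ε)) := by
              have h1 : Real.exp ((-Real.log (1 - ε) / ε) * ∫ τ in s..b, g τ) ≤
                  Real.exp (c1 * (-Real.log (1 - ε) / ε)) := by
                apply Real.exp_le_exp.2
                rw [mul_comm c1]
                exact mul_le_mul_of_nonneg_left hgb hC0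
              have h2 : y s + (∫ τ in s..b, h τ) ≤ y s + c2 := by linarith
              exact mul_le_mul h2 h1 (Real.exp_pos _).le (by linarith)
      -- limit ε → 0⁺
      have hd : HasDerivAt (fun u : ℝ => -Real.log (1 - u)) 1 0 := by
        have h1 : HasDerivAt (fun u : ℝ => 1 - u) (-1) 0 := (hasDerivAt_id 0).const_sub 1
        have h2 : HasDerivAt (fun u : ℝ => Real.log (1 - u)) (-1 / (1 - 0)) 0 :=
          h1.log (by norm_num)
        have h3 := h2.neg
        have h4 : (-(-1 / (1 - 0)) : ℝ) = 1 := by norm_num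
        rw [h4] at h3
        exact h3
      have hslope : Filter.Tendsto (fun ε : ℝ => -Real.log (1 - ε) / ε)
          (nhdsWithin 0 (Ioi 0)) (nhds 1) := by
        have h4 := hasDerivAt_iff_tendsto_slope.1 hd
        have h5 : Filter.Tendsto (slope (fun u : ℝ => -Real.log (1 - u)) 0)
            (nhdsWithin 0 (Ioi 0)) (nhds 1) :=
          h4.mono_left (nhdsWithin_mono 0 (fun z hz => ne_of_gt hz))
        refine h5.congr' ?_
        filter_upwards [self_mem_nhdsWithin] with ε hε
        rw [slope_def_field]
        simp
      have htend : Filter.Tendsto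
          (fun ε : ℝ => (y s + c2) * Real.exp (c1 * (-Real.log (1 - ε) / ε)))
          (nhdsWithin 0 (Ioi 0)) (nhds ((y s + c2) * Real.exp (c1 * 1))) := by
        exact ((Real.continuous_exp.continuousAt.tendsto.comp
          (hslope.const_mul c1)).const_mul (y s + c2))
      have hev : ∀ᶠ ε in nhdsWithin (0:ℝ) (Ioi 0),
          y b ≤ (y s + c2) * Real.exp (c1 * (-Real.log (1 - ε) / ε)) := by
        filter_upwards [Ioo_mem_nhdsGT_of_mem (Set.mem_Ico.2 ⟨le_rfl, one_pos⟩)] with ε hε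
        exact hεbound ε hε
      have := ge_of_tendsto htend hev
      simpa using this
  -- Step B : average over s ∈ [t, b]
  have hint2 : IntervalIntegrable (fun s => (y s + c2) * Real.exp c1) volume t b :=
    ((hyint t ht).add _root_.intervalIntegrable_const).mul_const _
  have hmono := intervalIntegral.integral_mono_on htb
    (_root_.intervalIntegrable_const (c := y b)) hint2 hA
  rw [intervalIntegral.integral_const] at hmono
  have hrhs : (∫ s in t..b, (y s + c2) * Real.exp c1) =
      ((∫ s in t..b, y s) + c2 * (b - t)) * Real.exp c1 := by
    rw [intervalIntegral.integral_mul_const,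
      intervalIntegral.integral_add (hyint t ht) _root_.intervalIntegrable_const,
      intervalIntegral.integral_const]
    simp only [smul_eq_mul]
    ring
  rw [hrhs] at hmono
  have hbt : b - t = r := by simp [hbdef]
  rw [hbt] at hmono
  have hyb := hy t ht
  have hexp := Real.exp_pos c1
  have hkey : r * y b ≤ (c3 + c2 * r) * Real.exp c1 := by
    have : ((∫ s in t..b, y s) + c2 * r) * Real.exp c1 ≤ (c3 + c2 * r) * Real.exp c1 := by
      have h2 : (∫ s in t..b, y s) + c2 * r ≤ c3 + c2 * r := by
        simp only [hbdef] at *; linarith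
      exact mul_le_mul_of_nonneg_right h2 hexp.le
    calc r * y b = (y b) * r := by ring
      _ = r • y b := by rw [smul_eq_mul]; ring
      _ ≤ ((∫ s in t..b, y s) + c2 * r) * Real.exp c1 := hmono
      _ ≤ (c3 + c2 * r) * Real.exp c1 := this
  have hfe : (c3 / r + c2) * Real.exp c1 * r = (c3 + c2 * r) * Real.exp c1 := by
    field_simp
  show y b ≤ (c3 / r + c2) * Real.exp c1
  nlinarith [hkey, hfe]
end

section
/- Let ν ≥ 0 and r_0 > 0 with r_0² > ν². If r : [0, t*) → ℝ is continuous with r(0) = r_0 and satisfies the integro-differential equation r'(t) = r(t)·∫_0^t r(τ)² dτ + ν·r(t), with t* = (π/2 - arctan(ν/√(r_0²-ν²)))/√(r_0²-ν²), then ∫_0^t r(τ)² dτ → ∞ as t → t*⁻; in particular r cannot be extended continuously past t*. -/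
open Real Set Filter MeasureTheory intervalIntegral

/-- A function with vanishing derivative on `(0,T)` whose limit at `0⁺` is `L`
is constantly `L` on `(0,T)`. -/
lemma const_of_deriv_zero_of_tendsto {T L : ℝ} {φ : ℝ → ℝ}
    (hd : ∀ t ∈ Ioo (0:ℝ) T, HasDerivAt φ 0 t)
    (hlim : Tendsto φ (nhdsWithin (0:ℝ) (Ioi 0)) (nhds L)) :
    ∀ t ∈ Ioo (0:ℝ) T, φ t = L := by
  intro t ht
  have key : ∀ ε ∈ Ioc (0:ℝ) t, φ t = φ ε := by
    intro ε hε
    have hcont : ContinuousOn φ (Icc ε t) := by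
      intro x hx
      exact ((hd x ⟨lt_of_lt_of_le hε.1 hx.1, lt_of_le_of_lt hx.2 ht.2⟩).continuousAt).continuousWithinAt
    have hder : ∀ x ∈ Ico ε t, HasDerivWithinAt φ 0 (Ici x) x := by
      intro x hx
      exact (hd x ⟨lt_of_lt_of_le hε.1 hx.1, lt_trans hx.2 ht.2⟩).hasDerivWithinAt
    exact constant_of_has_deriv_right_zero hcont hder t ⟨hε.2, le_refl t⟩
  have hmem : Ioc (0:ℝ) t ∈ nhdsWithin (0:ℝ) (Ioi 0) :=
    Ioc_mem_nhdsGT_of_mem ⟨le_refl 0, ht.1⟩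
  have h2 : Tendsto φ (nhdsWithin (0:ℝ) (Ioi 0)) (nhds (φ t)) := by
    refine tendsto_const_nhds.congr' ?_
    filter_upwards [hmem] with ε hε
    exact key ε hε
  exact tendsto_nhds_unique h2 hlim

/-- Finite-time blow-up of the ansatz `f_x(x,t) = r(t)·cos x`:
the quantity `∫_0^t r(τ)² dτ` blows up as `t → t*⁻`. -/
theorem ansatz_blowup (ν r0 : ℝ) (hν : 0 ≤ ν) (hr0 : 0 < r0) (h : ν ^ 2 < r0 ^ 2)
    (tstar : ℝ)
    (htstar : tstar = (Real.pi / 2 - Real.arctan (ν / Real.sqrt (r0 ^ 2 - ν ^ 2))) /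
      Real.sqrt (r0 ^ 2 - ν ^ 2))
    (r : ℝ → ℝ) (hcont : ContinuousOn r (Ico 0 tstar)) (hinit : r 0 = r0)
    (hode : ∀ t ∈ Ico (0:ℝ) tstar,
      HasDerivAt r (r t * (∫ τ in (0:ℝ)..t, (r τ) ^ 2) + ν * r t) t) :
    Tendsto (fun t => ∫ τ in (0:ℝ)..t, (r τ) ^ 2) (nhdsWithin tstar (Iio tstar)) atTop := by
  set c : ℝ := Real.sqrt (r0 ^ 2 - ν ^ 2) with hc
  have hcpos : 0 < c := Real.sqrt_pos.2 (by linarith)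
  have hc2 : c ^ 2 = r0 ^ 2 - ν ^ 2 := Real.sq_sqrt (by linarith)
  set θ0 : ℝ := Real.arctan (ν / c) with hθ0
  have hθ0lt : θ0 < Real.pi / 2 := Real.arctan_lt_pi_div_two _
  have hθ0gt : -(Real.pi / 2) < θ0 := Real.neg_pi_div_two_lt_arctan _
  have htpos : 0 < tstar := by
    rw [htstar]
    exact div_pos (by linarith) hcpos
  have hkey : c * tstar + θ0 = Real.pi / 2 := by
    rw [htstar]
    field_simp
    ring
  set G : ℝ → ℝ := fun t => ∫ τ in (0:ℝ)..t, (r τ) ^ 2 with hG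
  -- continuity of r at interior points (full nhds)
  have hrC : ∀ t ∈ Ico (0:ℝ) tstar, ContinuousAt r t := fun t ht => (hode t ht).continuousAt
  have hr2C : ContinuousOn (fun τ => (r τ) ^ 2) (Ioo 0 tstar) := by
    intro x hx
    exact ((hrC x ⟨le_of_lt hx.1, hx.2⟩).pow 2).continuousWithinAt
  -- G has derivative r t ^ 2 at interior points
  have hGd : ∀ t ∈ Ioo (0:ℝ) tstar, HasDerivAt G ((r t) ^ 2) t := by
    intro t ht
    have hsub : Icc (0:ℝ) t ⊆ Ico 0 tstar := Icc_subset_Ico_right ht.2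
    have hint : IntervalIntegrable (fun τ => (r τ) ^ 2) volume 0 t := by
      have : ContinuousOn (fun τ => (r τ) ^ 2) (Icc 0 t) := ((hcont.mono hsub).pow 2)
      exact this.intervalIntegrable_of_Icc (le_of_lt ht.1)
    have hmeas : StronglyMeasurableAtFilter (fun τ => (r τ) ^ 2) (nhds t) volume :=
      hr2C.stronglyMeasurableAtFilter isOpen_Ioo t ht
    exact intervalIntegral.integral_hasDerivAt_right hint hmeas
      ((hrC t ⟨le_of_lt ht.1, ht.2⟩).pow 2)
  -- G tends to 0 at 0⁺
  have hle : nhdsWithin (0:ℝ) (Ioi 0) ≤ nhdsWithin (0:ℝ) (Icc 0 (tstar/2)) := by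
    apply nhdsWithin_le_of_mem
    apply mem_of_superset (Ioo_mem_nhdsGT_of_mem ⟨le_refl 0, half_pos htpos⟩)
    exact Ioo_subset_Icc_self
  have hG0 : Tendsto G (nhdsWithin (0:ℝ) (Ioi 0)) (nhds 0) := by
    have hio : IntegrableOn (fun τ => (r τ) ^ 2) (uIcc 0 (tstar/2)) volume := by
      rw [uIcc_of_le (le_of_lt (half_pos htpos))]
      have hsub : Icc (0:ℝ) (tstar/2) ⊆ Ico 0 tstar :=
        Icc_subset_Ico_right (half_lt_self htpos)
      exact ((hcont.mono hsub).pow 2).integrableOn_compact isCompact_Icc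
    have hcG : ContinuousOn G (uIcc 0 (tstar/2)) :=
      intervalIntegral.continuousOn_primitive_interval hio
    have h0mem : (0:ℝ) ∈ uIcc 0 (tstar/2) := left_mem_uIcc
    have := (hcG 0 h0mem).tendsto
    have hG00 : G 0 = 0 := by simp [hG]
    rw [hG00, uIcc_of_le (le_of_lt (half_pos htpos))] at this
    exact this.mono_left hle
  -- r tends to r0 at 0⁺
  have hr0lim : Tendsto r (nhdsWithin (0:ℝ) (Ioi 0)) (nhds r0) := by
    have := (hcont 0 ⟨le_refl 0, htpos⟩).tendsto
    rw [hinit] at this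
    refine this.mono_left ?_
    apply nhdsWithin_le_of_mem
    apply mem_of_superset (Ioo_mem_nhdsGT_of_mem ⟨le_refl 0, htpos⟩)
    exact Ioo_subset_Ico_self
  -- conserved quantity: r t ^ 2 - (G t + ν)^2 = c ^ 2
  have hψ : ∀ t ∈ Ioo (0:ℝ) tstar, r t ^ 2 - (G t + ν) ^ 2 = c ^ 2 := by
    apply const_of_deriv_zero_of_tendsto
    · intro t ht
      have h1 : HasDerivAt r (r t * G t + ν * r t) t := hode t ⟨le_of_lt ht.1, ht.2⟩
      have h2 := hGd t ht
      have := ((h1.pow 2).sub (((h2.add_const ν).pow 2)))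
      convert this using 1
      · rfl
      · rfl
      · rfl
      ring
    · have : Tendsto (fun t => r t ^ 2 - (G t + ν) ^ 2) (nhdsWithin (0:ℝ) (Ioi 0))
          (nhds (r0 ^ 2 - (0 + ν) ^ 2)) := by
        exact ((hr0lim.pow 2).sub (((hG0.add_const ν).pow 2)))
      simpa [hc2] using this
  -- φ t := arctan ((G t + ν)/c) - c*t is constant θ0
  have hφ : ∀ t ∈ Ioo (0:ℝ) tstar, Real.arctan ((G t + ν) / c) - c * t = θ0 := by
    apply const_of_deriv_zero_of_tendsto
    · intro t ht
      have h2 := hGd t ht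
      have h3 : HasDerivAt (fun t => (G t + ν) / c) ((r t) ^ 2 / c) t :=
        (h2.add_const ν).div_const c
      have h4 : HasDerivAt (fun t => Real.arctan ((G t + ν) / c))
          ((1 / (1 + ((G t + ν) / c) ^ 2)) * ((r t) ^ 2 / c)) t :=
        (Real.hasDerivAt_arctan ((G t + ν) / c)).comp (h := fun t => (G t + ν) / c) t h3
      have h5 := h4.sub ((hasDerivAt_id t).const_mul c)
      have hrel := hψ t ht
      have hr2 : (r t) ^ 2 = (G t + ν) ^ 2 + c ^ 2 := by linarith
      convert h5 using 1
      · rfl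
      · rfl
      · rfl
      rw [hr2]
      have hcne : c ≠ 0 := ne_of_gt hcpos
      field_simp
      ring
    · have : Tendsto (fun t => Real.arctan ((G t + ν) / c) - c * t)
          (nhdsWithin (0:ℝ) (Ioi 0)) (nhds (Real.arctan ((0 + ν) / c) - c * 0)) := by
        exact ((Real.continuous_arctan.tendsto _).comp ((hG0.add_const ν).div_const c)).sub
          ((tendsto_nhdsWithin_of_tendsto_nhds ((continuous_const.mul continuous_id).tendsto 0)))
      simpa [hθ0] using this
  -- hence G t = c * tan (c*t + θ0) on (0, tstar)
  have hGeq : ∀ t ∈ Ioo (0:ℝ) tstar, G t = c * Real.tan (c * t + θ0) - ν := by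
    intro t ht
    have heq : Real.arctan ((G t + ν) / c) = c * t + θ0 := by
      have := hφ t ht; linarith
    have : (G t + ν) / c = Real.tan (c * t + θ0) := by
      rw [← heq, Real.tan_arctan]
    field_simp at this
    linarith
  -- tendsto of c*t + θ0 to π/2 within Iio
  have h1 : Tendsto (fun t => c * t + θ0) (nhdsWithin tstar (Iio tstar))
      (nhdsWithin (Real.pi / 2) (Iio (Real.pi / 2))) := by
    rw [tendsto_nhdsWithin_iff]
    constructor
    · have : Tendsto (fun t => c * t + θ0) (nhds tstar) (nhds (c * tstar + θ0)) :=
        ((continuous_const.mul continuous_id).add continuous_const).tendsto tstar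
      rw [hkey] at this
      exact this.mono_left nhdsWithin_le_nhds
    · filter_upwards [self_mem_nhdsWithin] with t ht
      have : c * t < c * tstar := by
        exact (mul_lt_mul_iff_right₀ hcpos).2 ht
      simp only [mem_Iio]
      linarith [hkey]
  have h2 : Tendsto (fun t => c * Real.tan (c * t + θ0) - ν)
      (nhdsWithin tstar (Iio tstar)) atTop := by
    have := (Real.tendsto_tan_pi_div_two.comp h1).const_mul_atTop hcpos
    exact tendsto_atTop_add_const_right _ (-ν) this
  refine h2.congr' ?_
  filter_upwards [Ioo_mem_nhdsLT_of_mem ⟨htpos, le_refl tstar⟩] with t ht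
  exact (hGeq t ht).symm
end

section
/- Let M : [0,T) → ℝ be differentiable with M(0) > 0 and let g : [0,T) → ℝ be differentiable with g(0) = 0 and g ≥ 0. Suppose (M+g)'(t) ≤ M(t)² + g(t)·M(t) for all t, and M(t) ≥ 0. Then M(t) + g(t) ≤ M(0)/(1 - M(0)·t) for all t ∈ [0, min(T, 1/M(0))). -/
open Real Set

/-- Riccati-type comparison controlling `M(t) + g(t)` (Lemma 6.2). -/
theorem riccati_max_control (T : ℝ) (hT : 0 < T) (M g M' g' : ℝ → ℝ)
    (hM0 : 0 < M 0) (hg0 : g 0 = 0)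
    (hMderiv : ∀ t ∈ Ico (0:ℝ) T, HasDerivAt M (M' t) t)
    (hgderiv : ∀ t ∈ Ico (0:ℝ) T, HasDerivAt g (g' t) t)
    (hgnonneg : ∀ t ∈ Ico (0:ℝ) T, 0 ≤ g t)
    (hMnonneg : ∀ t ∈ Ico (0:ℝ) T, 0 ≤ M t)
    (hineq : ∀ t ∈ Ico (0:ℝ) T, M' t + g' t ≤ M t ^ 2 + g t * M t) :
    ∀ t ∈ Ico (0:ℝ) (min T (1 / M 0)), M t + g t ≤ M 0 / (1 - M 0 * t) := by
  intro t ht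
  obtain ⟨ht0, htlt⟩ := ht
  rw [lt_min_iff] at htlt
  obtain ⟨htT, htM⟩ := htlt
  set m := M 0 with hm
  have hmpos : 0 < m := hM0
  -- positivity of 1 - m*s on [0,t]
  have hpos : ∀ s ∈ Icc (0:ℝ) t, 0 < 1 - m * s := by
    intro s hs
    have h1 : m * s ≤ m * t := by nlinarith [hs.2]
    have h2 : m * t < 1 := by
      have := (lt_div_iff₀ hmpos).mp htM
      nlinarith
    linarith
  have hsub : Icc (0:ℝ) t ⊆ Ico (0:ℝ) T := fun s hs => ⟨hs.1, lt_of_le_of_lt hs.2 htT⟩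
  have hpost : 0 < 1 - m * t := hpos t ⟨ht0, le_refl t⟩
  set K := m / (1 - m * t) with hK
  have hKpos : 0 < K := div_pos hmpos hpost
  have hBle : ∀ s ∈ Icc (0:ℝ) t, m / (1 - m * s) ≤ K := by
    intro s hs
    apply div_le_div_of_nonneg_left (le_of_lt hmpos) hpost
    nlinarith [hs.2]
  set C := 2 * K + 1 with hC
  have hCpos : 0 < C := by positivity
  -- main claim with perturbation ε
  have key : ∀ ε : ℝ, 0 < ε → ε * Real.exp (C * t) ≤ 1 →
      M t + g t ≤ m / (1 - m * t) + ε * Real.exp (C * t) := by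
    intro ε hε hε1
    have hF : ContinuousOn (fun s => M s + g s) (Icc 0 t) := fun s hs =>
      (((hMderiv s (hsub hs)).add (hgderiv s (hsub hs))).continuousAt).continuousWithinAt
    have hB' : ∀ x ∈ Ico (0:ℝ) t,
        HasDerivAt (fun s => m / (1 - m * s) + ε * Real.exp (C * s))
          (m ^ 2 / (1 - m * x) ^ 2 + ε * (Real.exp (C * x) * C)) x := by
      intro x hx
      have hne : (1 - m * x) ≠ 0 := ne_of_gt (hpos x ⟨hx.1, le_of_lt hx.2⟩)
      have h1 : HasDerivAt (fun s => 1 - m * s) (-m) x := by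
        simpa using ((hasDerivAt_id x).const_mul m).const_sub 1
      have h2 : HasDerivAt (fun s => m / (1 - m * s))
          ((0 * (1 - m * x) - m * (-m)) / (1 - m * x) ^ 2) x :=
        (hasDerivAt_const x m).div h1 hne
      have h2' : HasDerivAt (fun s => m / (1 - m * s)) (m ^ 2 / (1 - m * x) ^ 2) x := by
        convert h2 using 1; ring
      have h3 : HasDerivAt (fun s => Real.exp (C * s)) (Real.exp (C * x) * C) x := by
        simpa [Function.comp_def] using (Real.hasDerivAt_exp (C * x)).comp x ((hasDerivAt_id x).const_mul C)
      exact h2'.add (h3.const_mul ε)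
    have := image_le_of_deriv_right_lt_deriv_boundary'
      (f := fun s => M s + g s) (f' := fun s => M' s + g' s) (a := 0) (b := t)
      (B := fun s => m / (1 - m * s) + ε * Real.exp (C * s))
      (B' := fun x => m ^ 2 / (1 - m * x) ^ 2 + ε * (Real.exp (C * x) * C))
      hF
      (fun x hx => (((hMderiv x (hsub ⟨hx.1, le_of_lt hx.2⟩)).add
        (hgderiv x (hsub ⟨hx.1, le_of_lt hx.2⟩))).hasDerivWithinAt))
      (by
        simp only [hg0, mul_zero, sub_zero, Real.exp_zero, mul_one, add_zero, div_one]
        linarith)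
      (by
        apply ContinuousOn.add
        · exact ContinuousOn.div continuousOn_const (by fun_prop)
            (fun s hs => ne_of_gt (hpos s hs))
        · fun_prop)
      (fun x hx => (hB' x hx).hasDerivWithinAt)
      (by
        intro x hx heq
        have hxIcc : x ∈ Icc (0:ℝ) t := ⟨hx.1, le_of_lt hx.2⟩
        have hxT := hsub hxIcc
        have hMx := hMnonneg x hxT
        have hgx := hgnonneg x hxT
        have h1 : M' x + g' x ≤ (M x + g x) ^ 2 := by
          have := hineq x hxT
          nlinarith
        have hBx : m / (1 - m * x) ≤ K := hBle x hxIcc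
        have hex : ε * Real.exp (C * x) < 1 := by
          have hlt : Real.exp (C * x) < Real.exp (C * t) :=
            Real.exp_lt_exp.mpr (by nlinarith [hx.2])
          nlinarith
        have hBpos : 0 < m / (1 - m * x) := div_pos hmpos (hpos x hxIcc)
        calc M' x + g' x ≤ (M x + g x) ^ 2 := h1
          _ = (m / (1 - m * x) + ε * Real.exp (C * x)) ^ 2 := congrArg (· ^ 2) heq
          _ = (m / (1 - m * x)) ^ 2 + ε * Real.exp (C * x) *
                (2 * (m / (1 - m * x)) + ε * Real.exp (C * x)) := by ring
          _ < (m / (1 - m * x)) ^ 2 + ε * (Real.exp (C * x) * C) := by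
              have hexp : 0 < ε * Real.exp (C * x) := by positivity
              have : 2 * (m / (1 - m * x)) + ε * Real.exp (C * x) < C := by
                rw [hC]; nlinarith
              nlinarith
          _ = m ^ 2 / (1 - m * x) ^ 2 + ε * (Real.exp (C * x) * C) := by
              rw [div_pow])
    exact this ⟨le_refl 0 |>.trans ht0, le_refl t⟩ |>.trans (le_refl _)
  -- pass to the limit ε → 0
  have hfin : M t + g t ≤ m / (1 - m * t) := by
    apply le_of_forall_pos_le_add
    intro δ hδ
    have hexppos : 0 < Real.exp (C * t) := Real.exp_pos _
    set ε := min δ 1 * Real.exp (-(C * t)) with hε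
    have hεpos : 0 < ε := by positivity
    have hεe : ε * Real.exp (C * t) = min δ 1 := by
      rw [hε, mul_assoc, ← Real.exp_add, neg_add_cancel, Real.exp_zero, mul_one]
    have h := key ε hεpos (by rw [hεe]; exact min_le_right _ _)
    rw [hεe] at h
    linarith [min_le_left δ 1]
  exact hfin
end
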